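/- arXiv:2605.20975 — 3 statements merged into one kernel-verified Lean document; each statement's English description precedes it below -/
import Mathlib

section
/- Let (Ω₀, F, P) be a probability space, Ω a nonempty finite set, PFL : Ω → ℝ a function with minimizer W⋆, and for each W ∈ Ω let ξ_W be a real-valued random variable. Let S = max_{W ∈ Ω} |ξ_W|, let E[S] denote its expectation (assumed finite), and let σ > 0. Assume the tail bound P(S − E[S] > u) ≤ 2·exp(−u²/(2σ²)) holds for every u > 0. Let W_Y⋆ : Ω₀ → Ω be a random element that almost surely minimizes the noisy objective Y(W) = PFL(W) + ξ_W over Ω. Then for every μ > 2·E[S], P(PFL(W_Y⋆) − PFL(W⋆) > μ) ≤ 2·exp(−(μ/2 − E[S])²/(2σ²)). -/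
open MeasureTheory

/-- The supremum `S(ω) = max_{W ∈ Ω} |ξ_W(ω)|` of the noise process. -/
noncomputable def noiseSup {Ω₀ : Type*} {Ω : Type*} [Fintype Ω] [Nonempty Ω]
    (ξ : Ω → Ω₀ → ℝ) (ω : Ω₀) : ℝ :=
  Finset.univ.sup' Finset.univ_nonempty fun W => |ξ W ω|

/-- **Global μ-Optimality** theorem: under the Borell–TIS-type tail bound
`P(S − E[S] > u) ≤ 2·exp(−u²/(2σ²))` on the supremum `S` of the noise process,
for every `μ > 2·E[S]` the probability that the minimizer of the noisy objective
fails to be `μ`-suboptimal for the true objective is at most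
`2·exp(−(μ/2 − E[S])²/(2σ²))`. -/
theorem global_mu_optimality
    {Ω₀ : Type*} [MeasurableSpace Ω₀] (P : Measure Ω₀) [IsProbabilityMeasure P]
    {Ω : Type*} [Fintype Ω] [Nonempty Ω]
    (PFL : Ω → ℝ) (Wstar : Ω) (hWstar : ∀ W, PFL Wstar ≤ PFL W)
    (ξ : Ω → Ω₀ → ℝ)
    (hint : Integrable (noiseSup ξ) P)
    (σ : ℝ) (hσ : 0 < σ)
    (htail : ∀ u : ℝ, 0 < u →
      P {ω | noiseSup ξ ω - ∫ ω', noiseSup ξ ω' ∂P > u}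
        ≤ ENNReal.ofReal (2 * Real.exp (-(u ^ 2) / (2 * σ ^ 2))))
    (WYstar : Ω₀ → Ω)
    (hWYstar : ∀ᵐ ω ∂P, ∀ W : Ω, PFL (WYstar ω) + ξ (WYstar ω) ω ≤ PFL W + ξ W ω)
    (μ : ℝ) (hμ : 2 * ∫ ω', noiseSup ξ ω' ∂P < μ) :
    P {ω | PFL (WYstar ω) - PFL Wstar > μ}
      ≤ ENNReal.ofReal
          (2 * Real.exp (-((μ / 2 - ∫ ω', noiseSup ξ ω' ∂P) ^ 2) / (2 * σ ^ 2))) := by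
  set E := ∫ ω', noiseSup ξ ω' ∂P with hE
  have hu : (0:ℝ) < μ / 2 - E := by linarith
  refine le_trans ?_ (htail (μ / 2 - E) hu)
  apply measure_mono_ae
  filter_upwards [hWYstar] with ω hω hmem
  have h1 : PFL (WYstar ω) + ξ (WYstar ω) ω ≤ PFL Wstar + ξ Wstar ω := hω Wstar
  have h2 : |ξ Wstar ω| ≤ noiseSup ξ ω :=
    Finset.le_sup' (fun W => |ξ W ω|) (Finset.mem_univ Wstar)
  have h3 : |ξ (WYstar ω) ω| ≤ noiseSup ξ ω :=
    Finset.le_sup' (fun W => |ξ W ω|) (Finset.mem_univ (WYstar ω))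
  have ha := abs_le.1 (le_trans le_rfl h2)
  have hb := abs_le.1 (le_trans le_rfl h3)
  have hmem' : PFL (WYstar ω) - PFL Wstar > μ := hmem
  show noiseSup ξ ω - E > μ / 2 - E
  linarith
end

section
/- Let M > 0, ε > 0, and δ ∈ (0, 1), and set σ = (√(2M·ln(1/δ)) + √(2M·(ln(1/δ) + ε))) / (2ε). Then the infimum over α ∈ (1, ∞) of the function α ↦ M·α/(2σ²) + ln(1/δ)/(α − 1) equals ε. In particular, this noise scale σ makes the composed release of M Gaussian-mechanism queries of unit L₂-sensitivity satisfy the target privacy level ε at failure probability δ under RDP-to-DP conversion. -/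
set_option maxHeartbeats 800000


/-- Closed-form noise calibration (Equation 8): with
`σ = (√(2M·ln(1/δ)) + √(2M·(ln(1/δ) + ε))) / (2ε)`, the RDP-to-DP conversion
`inf_{α > 1} (M·α/(2σ²) + ln(1/δ)/(α − 1))` equals exactly the target privacy
level `ε`. -/
theorem noise_calibration (M ε δ σ : ℝ) (hM : 0 < M) (hε : 0 < ε)
    (hδ0 : 0 < δ) (hδ1 : δ < 1)
    (hσ : σ = (Real.sqrt (2 * M * Real.log (1 / δ))
        + Real.sqrt (2 * M * (Real.log (1 / δ) + ε))) / (2 * ε)) :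
    sInf ((fun α : ℝ => M * α / (2 * σ ^ 2) + Real.log (1 / δ) / (α - 1)) ''
        Set.Ioi 1) = ε := by
  set L : ℝ := Real.log (1 / δ) with hLdef
  have hL : 0 < L := Real.log_pos (one_lt_one_div hδ0 hδ1)
  set a : ℝ := Real.sqrt (2 * M * L) with hadef
  set b : ℝ := Real.sqrt (2 * M * (L + ε)) with hbdef
  have ha0 : 0 < a := Real.sqrt_pos.mpr (by positivity)
  have hb0 : 0 < b := Real.sqrt_pos.mpr (by positivity)
  have ha : a ^ 2 = 2 * M * L := Real.sq_sqrt (by positivity)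
  have hb : b ^ 2 = 2 * M * (L + ε) := Real.sq_sqrt (by positivity)
  have hab : 0 < a + b := by linarith
  have hσ0 : 0 < σ := by rw [hσ]; positivity
  set c : ℝ := 2 * M * ε ^ 2 / (a + b) ^ 2 with hcdef
  have hc0 : 0 < c := by positivity
  have hc : M / (2 * σ ^ 2) = c := by
    rw [hσ, hcdef]; field_simp
  have hcab : c * (a + b) ^ 2 = 2 * M * ε ^ 2 := by
    rw [hcdef]; field_simp
  have h2 : (ε - c) * (a + b) = 2 * ε * a := by
    have h2' : (ε - c) * (a + b) * (a + b) = 2 * ε * a * (a + b) := by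
      linear_combination (-1 : ℝ) * hcab + ε * hb - ε * ha
    exact mul_right_cancel₀ hab.ne' h2'
  have hεc : 0 ≤ ε - c := by
    have h5 : 0 < (ε - c) * (a + b) := by rw [h2]; positivity
    nlinarith [h5, hab]
  have hQ : (ε - c) ^ 2 = 4 * c * L := by
    have h3 : (ε - c) ^ 2 * (a + b) ^ 2 = 4 * c * L * (a + b) ^ 2 := by
      linear_combination ((ε - c) * (a + b) + 2 * ε * a) * h2 + 4 * ε ^ 2 * ha
        - 4 * L * hcab
    exact mul_right_cancel₀ (pow_ne_zero 2 hab.ne') h3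
  set s : ℝ := Real.sqrt (c * L) with hsdef
  have hs0 : 0 < s := Real.sqrt_pos.mpr (by positivity)
  have hs2 : s ^ 2 = c * L := Real.sq_sqrt (by positivity)
  have hεeq : ε = c + 2 * s := by
    nlinarith [hs2, hQ, hεc, hs0]
  have h1 : ∀ α : ℝ, M * α / (2 * σ ^ 2) = c * α := by
    intro α; rw [← hc]; ring
  clear_value L a b c s
  apply IsLeast.csInf_eq
  constructor
  · refine ⟨1 + s / c, by simp only [Set.mem_Ioi, lt_add_iff_pos_right]; positivity, ?_⟩
    simp only
    rw [h1]
    have : (1 : ℝ) + s / c - 1 = s / c := by ring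
    rw [this]
    field_simp
    linear_combination (-s) * hεeq - hs2
  · rintro y ⟨α, hα, rfl⟩
    simp only [Set.mem_Ioi] at hα
    have ht : 0 < α - 1 := by linarith
    show ε ≤ M * α / (2 * σ ^ 2) + L / (α - 1)
    rw [h1]
    have hnn : 0 ≤ c * (α - 1) ^ 2 - 2 * s * (α - 1) + L := by
      have hsq := sq_nonneg (c * (α - 1) - s)
      nlinarith [hsq, hs2, hc0]
    have key : (ε - c * α) * (α - 1) ≤ L := by nlinarith [hnn, hεeq]
    have : ε - c * α ≤ L / (α - 1) := by
      rw [le_div_iff₀ ht]; exact key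
    linarith
end

section
/- Let X and Y be nonempty finite types, and let n_{xy} > 0 for (x, y) ∈ X × Y be positive real joint counts with total n = Σ_{x,y} n_{xy}. Define p_{xy} = n_{xy}/n, the marginals p_x = Σ_y p_{xy} and p_y = Σ_x p_{xy}, the mutual information MI = Σ_{x,y} p_{xy}·log(p_{xy}/(p_x·p_y)), and the pointwise mutual information PMI(x, y) = log(p_{xy}/(p_x·p_y)). Then for each fixed cell (x₀, y₀), the function t ↦ MI evaluated with count n_{x₀y₀} replaced by t (all other counts fixed) is differentiable at t = n_{x₀y₀} with derivative (1/n)·(PMI(x₀, y₀) − MI). -/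
section

variable {X Y : Type*} [Fintype X] [Fintype Y]

/-- Total number of samples: `n = Σ_{x,y} n_{xy}`. -/
noncomputable def totalCount (c : X × Y → ℝ) : ℝ := ∑ p, c p

/-- Empirical joint probability `p_{xy} = n_{xy}/n`. -/
noncomputable def pJoint (c : X × Y → ℝ) (p : X × Y) : ℝ := c p / totalCount c

/-- Marginal `p_x = Σ_y p_{xy}`. -/
noncomputable def pMargX (c : X × Y → ℝ) (x : X) : ℝ := ∑ y, pJoint c (x, y)

/-- Marginal `p_y = Σ_x p_{xy}`. -/
noncomputable def pMargY (c : X × Y → ℝ) (y : Y) : ℝ := ∑ x, pJoint c (x, y)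

/-- Pointwise mutual information `PMI(x, y) = log(p_{xy}/(p_x·p_y))`. -/
noncomputable def empPMI (c : X × Y → ℝ) (x : X) (y : Y) : ℝ :=
  Real.log (pJoint c (x, y) / (pMargX c x * pMargY c y))

/-- Empirical mutual information `MI = Σ_{x,y} p_{xy}·log(p_{xy}/(p_x·p_y))`. -/
noncomputable def empMI (c : X × Y → ℝ) : ℝ :=
  ∑ x, ∑ y, pJoint c (x, y) * empPMI c x y

end


section
variable {X Y : Type*} [Fintype X] [Fintype Y]

noncomputable def aX (c : X × Y → ℝ) (x : X) : ℝ := ∑ y, c (x, y)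
noncomputable def bY (c : X × Y → ℝ) (y : Y) : ℝ := ∑ x, c (x, y)

variable [Nonempty X] [Nonempty Y]

lemma totalCount_pos (c : X × Y → ℝ) (hc : ∀ p, 0 < c p) : 0 < totalCount c :=
  Finset.sum_pos (fun p _ => hc p) Finset.univ_nonempty

lemma aX_pos (c : X × Y → ℝ) (hc : ∀ p, 0 < c p) (x : X) : 0 < aX c x :=
  Finset.sum_pos (fun y _ => hc (x, y)) Finset.univ_nonempty

lemma bY_pos (c : X × Y → ℝ) (hc : ∀ p, 0 < c p) (y : Y) : 0 < bY c y :=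
  Finset.sum_pos (fun x _ => hc (x, y)) Finset.univ_nonempty

lemma pMargX_eq (c : X × Y → ℝ) (x : X) : pMargX c x = aX c x / totalCount c := by
  simp [pMargX, pJoint, aX, Finset.sum_div]

lemma pMargY_eq (c : X × Y → ℝ) (y : Y) : pMargY c y = bY c y / totalCount c := by
  simp [pMargY, pJoint, bY, Finset.sum_div]

lemma pmi_eq (c : X × Y → ℝ) (hc : ∀ p, 0 < c p) (x : X) (y : Y) :
    empPMI c x y = Real.log (c (x, y)) + Real.log (totalCount c)
      - Real.log (aX c x) - Real.log (bY c y) := by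
  have hN := totalCount_pos c hc
  have hA := aX_pos c hc x
  have hB := bY_pos c hc y
  have harg : pJoint c (x, y) / (pMargX c x * pMargY c y)
      = c (x, y) * totalCount c / (aX c x * bY c y) := by
    rw [pMargX_eq, pMargY_eq, pJoint]
    field_simp
  rw [empPMI, harg, Real.log_div (ne_of_gt (mul_pos (hc (x, y)) hN)) (ne_of_gt (mul_pos hA hB)),
    Real.log_mul (ne_of_gt (hc (x, y))) (ne_of_gt hN),
    Real.log_mul (ne_of_gt hA) (ne_of_gt hB)]
  ring

lemma mi_formula (c : X × Y → ℝ) (hc : ∀ p, 0 < c p) :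
    empMI c = ((∑ p : X × Y, c p * Real.log (c p))
      - (∑ x, aX c x * Real.log (aX c x))
      - (∑ y, bY c y * Real.log (bY c y))
      + totalCount c * Real.log (totalCount c)) / totalCount c := by
  have hN := totalCount_pos c hc
  rw [eq_div_iff (ne_of_gt hN), empMI, Finset.sum_mul]
  have step : ∀ x, (∑ y, pJoint c (x, y) * empPMI c x y) * totalCount c
      = ∑ y, (c (x, y) * Real.log (c (x, y)) + c (x, y) * Real.log (totalCount c)
        - c (x, y) * Real.log (aX c x) - c (x, y) * Real.log (bY c y)) := by
    intro x
    rw [Finset.sum_mul]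
    refine Finset.sum_congr rfl fun y _ => ?_
    rw [pmi_eq c hc, pJoint]
    field_simp
  rw [Finset.sum_congr rfl fun x _ => step x]
  have e1 : ∑ x, ∑ y, c (x, y) * Real.log (c (x, y))
      = ∑ p : X × Y, c p * Real.log (c p) := by
    rw [Fintype.sum_prod_type]
  have e2 : ∑ x, ∑ y, c (x, y) * Real.log (totalCount c)
      = totalCount c * Real.log (totalCount c) := by
    rw [← Fintype.sum_prod_type (f := fun p : X × Y => c p * Real.log (totalCount c)),
      ← Finset.sum_mul, totalCount]
  have e3 : ∀ x, ∑ y, c (x, y) * Real.log (aX c x) = aX c x * Real.log (aX c x) := by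
    intro x; rw [← Finset.sum_mul, aX]
  have e4 : ∑ x, ∑ y, c (x, y) * Real.log (bY c y)
      = ∑ y, bY c y * Real.log (bY c y) := by
    rw [Finset.sum_comm]
    exact Finset.sum_congr rfl fun y _ => by rw [← Finset.sum_mul, bY]
  calc ∑ x, ∑ y, (c (x, y) * Real.log (c (x, y)) + c (x, y) * Real.log (totalCount c)
        - c (x, y) * Real.log (aX c x) - c (x, y) * Real.log (bY c y))
      = (∑ x, ∑ y, c (x, y) * Real.log (c (x, y)))
        + (∑ x, ∑ y, c (x, y) * Real.log (totalCount c))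
        - (∑ x, ∑ y, c (x, y) * Real.log (aX c x))
        - (∑ x, ∑ y, c (x, y) * Real.log (bY c y)) := by
        simp [Finset.sum_add_distrib, Finset.sum_sub_distrib]
    _ = _ := by
        rw [e1, e2, e4, Finset.sum_congr rfl fun x _ => e3 x]; ring

end

/-- Gradient of mutual information with respect to a joint count (Equation 7):
for positive joint counts, the map sending the single count `n_{x₀y₀}` to the
empirical mutual information is differentiable at `n_{x₀y₀}` with derivative
`(1/n)·(PMI(x₀, y₀) − MI)`. -/
theorem mi_count_derivative
    {X Y : Type*} [Fintype X] [Fintype Y] [Nonempty X] [Nonempty Y]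
    [DecidableEq X] [DecidableEq Y]
    (c : X × Y → ℝ) (hc : ∀ p, 0 < c p) (x₀ : X) (y₀ : Y) :
    HasDerivAt (fun t => empMI (Function.update c (x₀, y₀) t))
      ((1 / totalCount c) * (empPMI c x₀ y₀ - empMI c))
      (c (x₀, y₀)) := by
  have hN := totalCount_pos c hc
  have hA := aX_pos c hc x₀
  have hB := bY_pos c hc y₀
  have ht₀ : (0:ℝ) < c (x₀, y₀) := hc (x₀, y₀)
  set t₀ : ℝ := c (x₀, y₀) with ht₀def
  set σ : ℝ := ∑ p ∈ Finset.univ.erase (x₀, y₀), c p with hσ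
  set α : ℝ := ∑ y ∈ Finset.univ.erase y₀, c (x₀, y) with hα
  set β : ℝ := ∑ x ∈ Finset.univ.erase x₀, c (x, y₀) with hβ
  set KJ : ℝ := ∑ p ∈ Finset.univ.erase (x₀, y₀), c p * Real.log (c p) with hKJ
  set KA : ℝ := ∑ x ∈ Finset.univ.erase x₀, aX c x * Real.log (aX c x) with hKA
  set KB : ℝ := ∑ y ∈ Finset.univ.erase y₀, bY c y * Real.log (bY c y) with hKB
  have hNs : totalCount c = t₀ + σ := by
    rw [totalCount, ← Finset.add_sum_erase _ c (Finset.mem_univ (x₀, y₀))]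
  have hAs : aX c x₀ = t₀ + α := by
    rw [aX, ← Finset.add_sum_erase _ (fun y => c (x₀, y)) (Finset.mem_univ y₀)]
  have hBs : bY c y₀ = t₀ + β := by
    rw [bY, ← Finset.add_sum_erase _ (fun x => c (x, y₀)) (Finset.mem_univ x₀)]
  -- the affine reparametrized MI
  have hF : ∀ t : ℝ, 0 < t → empMI (Function.update c (x₀, y₀) t)
      = (t * Real.log t + KJ - ((t + α) * Real.log (t + α) + KA)
        - ((t + β) * Real.log (t + β) + KB)
        + (t + σ) * Real.log (t + σ)) / (t + σ) := by
    intro t ht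
    set u := Function.update c (x₀, y₀) t with hu
    have hup : ∀ p, 0 < u p := by
      intro p
      by_cases h : p = (x₀, y₀)
      · simpa [hu, h] using ht
      · simpa [hu, Function.update_of_ne h] using hc p
    have hueq : ∀ p : X × Y, p ≠ (x₀, y₀) → u p = c p := fun p h =>
      Function.update_of_ne h _ _
    have h1 : totalCount u = t + σ := by
      rw [totalCount, ← Finset.add_sum_erase _ u (Finset.mem_univ (x₀, y₀))]
      congr 1
      · simp [hu]
      · exact Finset.sum_congr rfl fun p hp => hueq p (Finset.ne_of_mem_erase hp)
    have h2 : ∑ p : X × Y, u p * Real.log (u p) = t * Real.log t + KJ := by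
      rw [← Finset.add_sum_erase _ (fun p => u p * Real.log (u p)) (Finset.mem_univ (x₀, y₀))]
      congr 1
      · simp [hu]
      · exact Finset.sum_congr rfl fun p hp => by
          rw [hueq p (Finset.ne_of_mem_erase hp)]
    have haU : ∀ x, x ≠ x₀ → aX u x = aX c x := by
      intro x hx
      exact Finset.sum_congr rfl fun y _ => hueq (x, y) (by simp [Prod.ext_iff, hx])
    have haU0 : aX u x₀ = t + α := by
      rw [aX, ← Finset.add_sum_erase _ (fun y => u (x₀, y)) (Finset.mem_univ y₀)]
      congr 1
      · simp [hu]
      · exact Finset.sum_congr rfl fun y hy =>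
          hueq (x₀, y) (by simp [Prod.ext_iff, Finset.ne_of_mem_erase hy])
    have hbU : ∀ y, y ≠ y₀ → bY u y = bY c y := by
      intro y hy
      exact Finset.sum_congr rfl fun x _ => hueq (x, y) (by simp [Prod.ext_iff, hy])
    have hbU0 : bY u y₀ = t + β := by
      rw [bY, ← Finset.add_sum_erase _ (fun x => u (x, y₀)) (Finset.mem_univ x₀)]
      congr 1
      · simp [hu]
      · exact Finset.sum_congr rfl fun x hx =>
          hueq (x, y₀) (by simp [Prod.ext_iff, Finset.ne_of_mem_erase hx])
    have h3 : ∑ x, aX u x * Real.log (aX u x) = (t + α) * Real.log (t + α) + KA := by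
      rw [← Finset.add_sum_erase _ (fun x => aX u x * Real.log (aX u x)) (Finset.mem_univ x₀)]
      congr 1
      · rw [haU0]
      · exact Finset.sum_congr rfl fun x hx => by
          rw [haU x (Finset.ne_of_mem_erase hx)]
    have h4 : ∑ y, bY u y * Real.log (bY u y) = (t + β) * Real.log (t + β) + KB := by
      rw [← Finset.add_sum_erase _ (fun y => bY u y * Real.log (bY u y)) (Finset.mem_univ y₀)]
      congr 1
      · rw [hbU0]
      · exact Finset.sum_congr rfl fun y hy => by
          rw [hbU y (Finset.ne_of_mem_erase hy)]
    rw [mi_formula u hup, h1, h2, h3, h4]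
  -- positivity of shifted values
  have ha' : t₀ + α ≠ 0 := by rw [← hAs]; exact hA.ne'
  have hb' : t₀ + β ≠ 0 := by rw [← hBs]; exact hB.ne'
  have hn' : t₀ + σ ≠ 0 := by rw [← hNs]; exact hN.ne'
  -- derivative of the numerator
  have d1 : HasDerivAt (fun t : ℝ => t * Real.log t) (Real.log t₀ + 1) t₀ :=
    Real.hasDerivAt_mul_log ht₀.ne'
  have d2 : HasDerivAt (fun t : ℝ => (t + α) * Real.log (t + α)) (Real.log (t₀ + α) + 1) t₀ := by
    have h := (Real.hasDerivAt_mul_log ha').comp t₀ ((hasDerivAt_id t₀).add_const α)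
    exact h.congr_deriv (mul_one _)
  have d3 : HasDerivAt (fun t : ℝ => (t + β) * Real.log (t + β)) (Real.log (t₀ + β) + 1) t₀ := by
    have h := (Real.hasDerivAt_mul_log hb').comp t₀ ((hasDerivAt_id t₀).add_const β)
    exact h.congr_deriv (mul_one _)
  have d4 : HasDerivAt (fun t : ℝ => (t + σ) * Real.log (t + σ)) (Real.log (t₀ + σ) + 1) t₀ := by
    have h := (Real.hasDerivAt_mul_log hn').comp t₀ ((hasDerivAt_id t₀).add_const σ)
    exact h.congr_deriv (mul_one _)
  have dnum : HasDerivAt (fun t : ℝ => t * Real.log t + KJ - ((t + α) * Real.log (t + α) + KA)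
      - ((t + β) * Real.log (t + β) + KB) + (t + σ) * Real.log (t + σ))
      ((Real.log t₀ + 1) - (Real.log (t₀ + α) + 1) - (Real.log (t₀ + β) + 1)
        + (Real.log (t₀ + σ) + 1)) t₀ :=
    (((d1.add_const KJ).sub (d2.add_const KA)).sub (d3.add_const KB)).add d4
  have dden : HasDerivAt (fun t : ℝ => t + σ) 1 t₀ := (hasDerivAt_id t₀).add_const σ
  have hQ := dnum.div dden hn'
  have hev : (fun t => empMI (Function.update c (x₀, y₀) t))
      =ᶠ[nhds t₀] (fun t => (t * Real.log t + KJ - ((t + α) * Real.log (t + α) + KA)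
        - ((t + β) * Real.log (t + β) + KB)
        + (t + σ) * Real.log (t + σ)) / (t + σ)) :=
    (eventually_gt_nhds ht₀).mono fun t ht => hF t ht
  have hfinal := hQ.congr_of_eventuallyEq hev
  refine hfinal.congr_deriv ?_
  -- value equality
  have hMI : empMI c * totalCount c
      = t₀ * Real.log t₀ + KJ - ((t₀ + α) * Real.log (t₀ + α) + KA)
        - ((t₀ + β) * Real.log (t₀ + β) + KB) + (t₀ + σ) * Real.log (t₀ + σ) := by
    rw [mi_formula c hc, div_mul_cancel₀ _ hN.ne']
    rw [← Finset.add_sum_erase _ (fun p => c p * Real.log (c p)) (Finset.mem_univ (x₀, y₀)),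
      ← Finset.add_sum_erase _ (fun x => aX c x * Real.log (aX c x)) (Finset.mem_univ x₀),
      ← Finset.add_sum_erase _ (fun y => bY c y * Real.log (bY c y)) (Finset.mem_univ y₀),
      hNs, hAs, hBs]
  have hPMI : empPMI c x₀ y₀
      = Real.log t₀ + Real.log (t₀ + σ) - Real.log (t₀ + α) - Real.log (t₀ + β) := by
    rw [pmi_eq c hc, hNs, hAs, hBs]
  rw [hPMI, hNs]
  rw [← hMI, hNs] at *
  field_simp
  ring
end
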